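/- arXiv:2306.12646 — 4 statements merged into one kernel-verified Lean document; each statement's English description precedes it below -/
import Mathlib

section
/- Restricted-integral rescaling identity used in the proof of Theorem 3.3: Let 1 ≤ t ≤ k ≤ T, let B ⊆ Z be a measurable set such that D_j(B) = 0 and O_j(B) = 0 for every index j with j < t or j > k, and let g : Z → [0,∞] be measurable. Then ∫_B g dD_{[1:k]}^{α} = (π_{[t:T]}/π_{[1:k]}) · ∫_B g dD_t^{α′_t}. -/
open MeasureTheory Finset

lemma restrict_fsum' {Z : Type*} [MeasurableSpace Z] {ι : Type*} (s : Finset ι)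
    (μ : ι → Measure Z) (B : Set Z) :
    (∑ i ∈ s, μ i).restrict B = ∑ i ∈ s, (μ i).restrict B := by
  induction s using Finset.cons_induction with
  | empty => simp
  | cons a s ha ih => simp [Finset.sum_cons, Measure.restrict_add, ih]

/-- Restricted-integral rescaling identity used in the proof of Theorem 3.3:
if `B` is a measurable set null for `D_j` and `O_j` whenever `j < t` or `j > k`, then
`∫_B g dD_{[1:k]}^{α} = (π_{[t:T]}/π_{[1:k]}) · ∫_B g dD_t^{α′_t}`. -/
theorem restricted_integral_rescaling_thm33
    {Z : Type*} [MeasurableSpace Z]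
    (T : ℕ) (hT : 1 ≤ T)
    (D O : ℕ → Measure Z)
    (hD : ∀ i ∈ Icc 1 T, IsProbabilityMeasure (D i))
    (hO : ∀ i ∈ Icc 1 T, IsProbabilityMeasure (O i))
    (π : ℕ → ENNReal) (hπpos : ∀ i ∈ Icc 1 T, 0 < π i)
    (hπsum : ∑ i ∈ Icc 1 T, π i = 1)
    (α : ℕ → ENNReal) (hα : ∀ i ∈ Icc 1 T, α i < 1)
    (t k : ℕ) (ht : 1 ≤ t) (htk : t ≤ k) (hkT : k ≤ T)
    (B : Set Z) (hB : MeasurableSet B)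
    (hnull : ∀ j ∈ Icc 1 T, (j < t ∨ k < j) → D j B = 0 ∧ O j B = 0)
    (g : Z → ENNReal) (hg : Measurable g) :
    (∫⁻ z in B, g z
        ∂((∑ i ∈ Icc 1 k, π i)⁻¹ •
          ∑ i ∈ Icc 1 k, π i • ((1 - α i) • D i + α i • O i)))
      = ((∑ i ∈ Icc t T, π i) / ∑ i ∈ Icc 1 k, π i) *
        ∫⁻ z in B, g z
          ∂((∑ i ∈ Icc t T, π i)⁻¹ •
            ∑ i ∈ Icc t T, π i • ((1 - α i) • D i + α i • O i)) := by
  set μ : ℕ → Measure Z := fun i => π i • ((1 - α i) • D i + α i • O i) with hμ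
  set F : ℕ → ENNReal := fun i => ∫⁻ z in B, g z ∂(μ i) with hF
  have hFzero : ∀ j ∈ Icc 1 T, (j < t ∨ k < j) → F j = 0 := by
    intro j hj hjr
    have h := hnull j hj hjr
    have hμB : μ j B = 0 := by
      simp [hμ, Measure.smul_apply, Measure.add_apply, h.1, h.2]
    exact setLIntegral_measure_zero _ _ hμB
  have hsum1 : ∑ i ∈ Icc 1 k, F i = ∑ i ∈ Icc t k, F i := by
    refine (Finset.sum_subset (Finset.Icc_subset_Icc ht le_rfl) ?_).symm
    intro j hj hj'
    simp only [Finset.mem_Icc, not_and_or, not_le] at hj hj'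
    refine hFzero j (Finset.mem_Icc.2 ⟨hj.1, le_trans hj.2 hkT⟩) ?_
    rcases hj' with h | h
    · exact Or.inl h
    · exact absurd hj.2 (not_le.2 h)
  have hsum2 : ∑ i ∈ Icc t T, F i = ∑ i ∈ Icc t k, F i := by
    refine (Finset.sum_subset (Finset.Icc_subset_Icc le_rfl hkT) ?_).symm
    intro j hj hj'
    simp only [Finset.mem_Icc, not_and_or, not_le] at hj hj'
    refine hFzero j (Finset.mem_Icc.2 ⟨le_trans ht hj.1, hj.2⟩) ?_
    rcases hj' with h | h
    · exact absurd hj.1 (not_le.2 h)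
    · exact Or.inr h
  set s := ∑ i ∈ Icc t T, π i with hs
  set c := ∑ i ∈ Icc 1 k, π i with hc
  have hL : (∫⁻ z in B, g z ∂((c)⁻¹ • ∑ i ∈ Icc 1 k, μ i))
      = c⁻¹ * ∑ i ∈ Icc 1 k, F i := by
    rw [Measure.restrict_smul, lintegral_smul_measure, restrict_fsum',
      lintegral_finset_sum_measure, smul_eq_mul]
  have hR : (∫⁻ z in B, g z ∂((s)⁻¹ • ∑ i ∈ Icc t T, μ i))
      = s⁻¹ * ∑ i ∈ Icc t T, F i := by
    rw [Measure.restrict_smul, lintegral_smul_measure, restrict_fsum',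
      lintegral_finset_sum_measure, smul_eq_mul]
  rw [hL, hR, hsum1, hsum2]
  have hs0 : s ≠ 0 := by
    have : 0 < π t := hπpos t (Finset.mem_Icc.2 ⟨ht, le_trans htk hkT⟩)
    have hts : t ∈ Icc t T := Finset.mem_Icc.2 ⟨le_rfl, le_trans htk hkT⟩
    exact fun h => absurd (Finset.sum_eq_zero_iff.1 h t hts) this.ne'
  have hstop : s ≠ ⊤ := by
    have : s ≤ 1 := hπsum ▸ Finset.sum_le_sum_of_subset (Finset.Icc_subset_Icc ht le_rfl)
    exact ne_top_of_le_ne_top ENNReal.one_ne_top this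
  rw [ENNReal.div_eq_inv_mul, mul_assoc, ← mul_assoc s s⁻¹,
    ENNReal.mul_inv_cancel hs0 hstop, one_mul]
end

section
/- Risk decomposition inequality (core of Theorem 3.3): Fix 1 ≤ k ≤ T. Let g_1^o, …, g_T^o, g_1^c, …, g_T^c and f̃ be measurable functions Z → [0,∞] such that for every 1 ≤ i ≤ k: f̃(z) ≤ Σ_{t=1}^{i−1} g_t^o(z) + g_i^c(z) for all z ∈ A_i, and f̃(z) ≤ Σ_{t=1}^{i} g_t^o(z) for all z ∈ B_i. For 1 ≤ t ≤ k define F_t : Z → [0,∞] by F_t(z) = g_t^c(z) if z ∈ A_t; F_t(z) = g_t^o(z) if z ∈ A_i for some i with t < i ≤ k, or z ∈ B_i for some i with t ≤ i ≤ k; and F_t(z) = 0 otherwise. Then ∫ f̃ dD_{[1:k]}^{α} ≤ Σ_{t=1}^{k} (π_{[t:T]}/π_{[1:k]}) · ∫ F_t dD_t^{α′_t}. -/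
open MeasureTheory Finset

/-- Risk decomposition inequality (core of Theorem 3.3): under the domination
hypotheses on `f̃` on the supports `A_i`, `B_i`, with
`F_t = g_t^c` on `A_t`, `F_t = g_t^o` on `A_i (t < i ≤ k)` and `B_i (t ≤ i ≤ k)`,
and `F_t = 0` elsewhere (written via indicators of the pairwise disjoint sets),
`∫ f̃ dD_{[1:k]}^{α} ≤ ∑_{t=1}^{k} (π_{[t:T]}/π_{[1:k]}) ∫ F_t dD_t^{α′_t}`. -/
theorem risk_decomposition_thm33
    {Z : Type*} [MeasurableSpace Z]
    (T : ℕ) (hT : 1 ≤ T)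
    (D O : ℕ → Measure Z)
    (hD : ∀ i ∈ Icc 1 T, IsProbabilityMeasure (D i))
    (hO : ∀ i ∈ Icc 1 T, IsProbabilityMeasure (O i))
    (π : ℕ → ENNReal) (hπpos : ∀ i ∈ Icc 1 T, 0 < π i)
    (hπsum : ∑ i ∈ Icc 1 T, π i = 1)
    (α : ℕ → ENNReal) (hα : ∀ i ∈ Icc 1 T, α i < 1)
    (A B : ℕ → Set Z)
    (hAmeas : ∀ i ∈ Icc 1 T, MeasurableSet (A i))
    (hBmeas : ∀ i ∈ Icc 1 T, MeasurableSet (B i))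
    (hdisj : ∀ i ∈ Icc 1 T, ∀ j ∈ Icc 1 T,
      (i ≠ j → Disjoint (A i) (A j)) ∧ (i ≠ j → Disjoint (B i) (B j)) ∧
        Disjoint (A i) (B j))
    (hDsupp : ∀ i ∈ Icc 1 T, D i (A i) = 1)
    (hOsupp : ∀ i ∈ Icc 1 T, O i (B i) = 1)
    (k : ℕ) (hk : k ∈ Icc 1 T)
    (go gc : ℕ → Z → ENNReal) (ftilde : Z → ENNReal)
    (hgo : ∀ t, Measurable (go t)) (hgc : ∀ t, Measurable (gc t))
    (hftilde : Measurable ftilde)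
    (hboundA : ∀ i ∈ Icc 1 k, ∀ z ∈ A i,
      ftilde z ≤ ∑ t ∈ Icc 1 (i - 1), go t z + gc i z)
    (hboundB : ∀ i ∈ Icc 1 k, ∀ z ∈ B i,
      ftilde z ≤ ∑ t ∈ Icc 1 i, go t z) :
    (∫⁻ z, ftilde z
        ∂((∑ i ∈ Icc 1 k, π i)⁻¹ •
          ∑ i ∈ Icc 1 k, π i • ((1 - α i) • D i + α i • O i)))
      ≤ ∑ t ∈ Icc 1 k,
          ((∑ i ∈ Icc t T, π i) / ∑ i ∈ Icc 1 k, π i) *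
          ∫⁻ z,
            ((A t).indicator (gc t) z +
              (⋃ i ∈ Set.Ioc t k, A i).indicator (go t) z +
              (⋃ i ∈ Set.Icc t k, B i).indicator (go t) z)
            ∂((∑ i ∈ Icc t T, π i)⁻¹ •
              ∑ i ∈ Icc t T, π i • ((1 - α i) • D i + α i • O i)) := by
  obtain ⟨hk1, hkT⟩ := Finset.mem_Icc.mp hk
  -- basic positivity/finiteness facts about partial sums of π
  have hsum_le_one : ∀ s : Finset ℕ, s ⊆ Icc 1 T → ∑ i ∈ s, π i ≤ 1 := by
    intro s hs
    rw [← hπsum]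
    exact Finset.sum_le_sum_of_subset hs
  have hc_ne_top : (∑ i ∈ Icc 1 k, π i) ≠ ⊤ := by
    refine ne_top_of_le_ne_top (by norm_num) (hsum_le_one _ ?_)
    exact Finset.Icc_subset_Icc le_rfl hkT
  have hc_ne_zero : (∑ i ∈ Icc 1 k, π i) ≠ 0 := by
    refine fun h => absurd h (ne_of_gt ?_)
    refine lt_of_lt_of_le (hπpos 1 (Finset.mem_Icc.mpr ⟨le_rfl, hT⟩)) ?_
    exact Finset.single_le_sum (f := π) (fun i _ => zero_le)
      (Finset.mem_Icc.mpr ⟨le_rfl, hk1⟩)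
  have hs_ne_top : ∀ t ∈ Icc 1 k, (∑ i ∈ Icc t T, π i) ≠ ⊤ := by
    intro t ht
    refine ne_top_of_le_ne_top (by norm_num) (hsum_le_one _ ?_)
    exact Finset.Icc_subset_Icc (Finset.mem_Icc.mp ht).1 le_rfl
  have hs_ne_zero : ∀ t ∈ Icc 1 k, (∑ i ∈ Icc t T, π i) ≠ 0 := by
    intro t ht
    obtain ⟨ht1, htk⟩ := Finset.mem_Icc.mp ht
    refine fun h => absurd h (ne_of_gt ?_)
    refine lt_of_lt_of_le (hπpos t (Finset.mem_Icc.mpr ⟨ht1, htk.trans hkT⟩)) ?_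
    exact Finset.single_le_sum (f := π) (fun i _ => zero_le)
      (Finset.mem_Icc.mpr ⟨le_rfl, htk.trans hkT⟩)
  -- expansion of integrals against the mixture measures
  have key : ∀ (a b : ℕ) (f : Z → ENNReal),
      ∫⁻ z, f z ∂(∑ i ∈ Icc a b, π i • ((1 - α i) • D i + α i • O i))
        = ∑ i ∈ Icc a b,
            π i * ((1 - α i) * ∫⁻ z, f z ∂(D i) + α i * ∫⁻ z, f z ∂(O i)) := by
    intro a b f
    rw [lintegral_finset_sum_measure]
    refine Finset.sum_congr rfl fun i _ => ?_
    rw [lintegral_smul_measure, lintegral_add_measure, lintegral_smul_measure,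
      lintegral_smul_measure]
    simp only [smul_eq_mul]
  -- a.e. membership facts
  have aeA : ∀ i ∈ Icc 1 T, ∀ᵐ z ∂(D i), z ∈ A i := by
    intro i hi
    haveI := hD i hi
    rw [MeasureTheory.ae_iff]
    have : {z | ¬ z ∈ A i} = (A i)ᶜ := rfl
    rw [this, prob_compl_eq_zero_iff (hAmeas i hi)]
    exact hDsupp i hi
  have aeB : ∀ i ∈ Icc 1 T, ∀ᵐ z ∂(O i), z ∈ B i := by
    intro i hi
    haveI := hO i hi
    rw [MeasureTheory.ae_iff]
    have : {z | ¬ z ∈ B i} = (B i)ᶜ := rfl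
    rw [this, prob_compl_eq_zero_iff (hBmeas i hi)]
    exact hOsupp i hi
  -- rewrite both sides
  rw [lintegral_smul_measure, smul_eq_mul, key]
  have hRHS : ∀ t ∈ Icc 1 k,
      ((∑ i ∈ Icc t T, π i) / ∑ i ∈ Icc 1 k, π i) *
        ∫⁻ z,
          ((A t).indicator (gc t) z +
            (⋃ i ∈ Set.Ioc t k, A i).indicator (go t) z +
            (⋃ i ∈ Set.Icc t k, B i).indicator (go t) z)
          ∂((∑ i ∈ Icc t T, π i)⁻¹ •
            ∑ i ∈ Icc t T, π i • ((1 - α i) • D i + α i • O i))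
      = (∑ i ∈ Icc 1 k, π i)⁻¹ *
          ∑ i ∈ Icc t T,
            π i * ((1 - α i) * (∫⁻ z,
              ((A t).indicator (gc t) z +
                (⋃ i ∈ Set.Ioc t k, A i).indicator (go t) z +
                (⋃ i ∈ Set.Icc t k, B i).indicator (go t) z) ∂(D i))
              + α i * (∫⁻ z,
              ((A t).indicator (gc t) z +
                (⋃ i ∈ Set.Ioc t k, A i).indicator (go t) z +
                (⋃ i ∈ Set.Icc t k, B i).indicator (go t) z) ∂(O i))) := by
    intro t ht
    rw [lintegral_smul_measure, smul_eq_mul, key, div_eq_mul_inv, ← mul_assoc]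
    congr 1
    rw [mul_right_comm, ENNReal.mul_inv_cancel (hs_ne_zero t ht) (hs_ne_top t ht), one_mul]
  rw [Finset.sum_congr rfl hRHS, ← Finset.mul_sum]
  refine mul_le_mul_right ?_ _
  -- main inequality on weighted sums
  -- lower bound for each t-term of the RHS
  set Ft : ℕ → Z → ENNReal := fun t z =>
    (A t).indicator (gc t) z + (⋃ i ∈ Set.Ioc t k, A i).indicator (go t) z +
      (⋃ i ∈ Set.Icc t k, B i).indicator (go t) z with hFt
  have step1 : ∀ t ∈ Icc 1 k,
      ∑ i ∈ Icc t k, π i * ((1 - α i) *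
          (∫⁻ z, (if i = t then gc t z else go t z) ∂(D i))
            + α i * (∫⁻ z, go t z ∂(O i)))
        ≤ ∑ i ∈ Icc t T,
            π i * ((1 - α i) * (∫⁻ z, Ft t z ∂(D i)) + α i * (∫⁻ z, Ft t z ∂(O i))) := by
    intro t ht
    obtain ⟨ht1, htk⟩ := Finset.mem_Icc.mp ht
    refine le_trans (Finset.sum_le_sum ?_) (Finset.sum_le_sum_of_subset
      (Finset.Icc_subset_Icc le_rfl hkT))
    intro i hi
    obtain ⟨hti, hik⟩ := Finset.mem_Icc.mp hi
    have hiT : i ∈ Icc 1 T := Finset.mem_Icc.mpr ⟨ht1.trans hti, hik.trans hkT⟩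
    have hD_le : (∫⁻ z, (if i = t then gc t z else go t z) ∂(D i))
        ≤ ∫⁻ z, Ft t z ∂(D i) := by
      refine lintegral_mono_ae ((aeA i hiT).mono fun z hz => ?_)
      by_cases hit : i = t
      · subst hit
        simp only [if_pos rfl]
        calc gc i z = (A i).indicator (gc i) z := by rw [Set.indicator_of_mem hz]
        _ ≤ Ft i z := le_trans le_self_add le_self_add
      · simp only [if_neg hit]
        have hmem : z ∈ ⋃ j ∈ Set.Ioc t k, A j := by
          exact Set.mem_biUnion (Set.mem_Ioc.mpr ⟨lt_of_le_of_ne hti (Ne.symm hit), hik⟩) hz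
        calc go t z = (⋃ j ∈ Set.Ioc t k, A j).indicator (go t) z := by
              rw [Set.indicator_of_mem hmem]
        _ ≤ Ft t z := le_trans le_add_self le_self_add
    have hO_le : (∫⁻ z, go t z ∂(O i)) ≤ ∫⁻ z, Ft t z ∂(O i) := by
      refine lintegral_mono_ae ((aeB i hiT).mono fun z hz => ?_)
      have hmem : z ∈ ⋃ j ∈ Set.Icc t k, B j :=
        Set.mem_biUnion (Set.mem_Icc.mpr ⟨hti, hik⟩) hz
      calc go t z = (⋃ j ∈ Set.Icc t k, B j).indicator (go t) z := by
            rw [Set.indicator_of_mem hmem]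
      _ ≤ Ft t z := le_add_self
    exact mul_le_mul_right (add_le_add (mul_le_mul_right hD_le _)
      (mul_le_mul_right hO_le _)) _
  refine le_trans ?_ (Finset.sum_le_sum step1)
  -- swap the double sum
  rw [Finset.sum_comm' (s' := fun i => Icc 1 i) (t' := Icc 1 k)
    (by intro t i; simp only [Finset.mem_Icc]; omega)]
  -- now per-i comparison
  refine Finset.sum_le_sum fun i hi => ?_
  obtain ⟨hi1, hik⟩ := Finset.mem_Icc.mp hi
  have hiT : i ∈ Icc 1 T := Finset.mem_Icc.mpr ⟨hi1, hik.trans hkT⟩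
  have hIcc : Finset.Icc 1 (i - 1) = Finset.Ico 1 i := by
    rw [← Finset.Ico_add_one_right_eq_Icc]
    congr 1
    omega
  have hsplit : ∀ f : ℕ → ENNReal,
      ∑ t ∈ Icc 1 i, f t = ∑ t ∈ Icc 1 (i - 1), f t + f i := by
    intro f
    rw [← Finset.Ico_add_one_right_eq_Icc, Finset.sum_Ico_succ_top hi1, hIcc]
  have hDi : (∫⁻ z, ftilde z ∂(D i)) ≤ ∑ t ∈ Icc 1 i,
      ∫⁻ z, (if i = t then gc t z else go t z) ∂(D i) := by
    rw [← lintegral_finset_sum _ (fun t _ => by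
      by_cases h : i = t <;> simp [h, hgc t, hgo t])]
    refine lintegral_mono_ae ((aeA i hiT).mono fun z hz => ?_)
    refine le_trans (hboundA i hi z hz) ?_
    rw [hsplit (fun t => if i = t then gc t z else go t z)]
    refine add_le_add (Finset.sum_le_sum fun t ht => ?_) ?_
    · have hne : i ≠ t := by have := (Finset.mem_Icc.mp ht).2; omega
      rw [if_neg hne]
    · rw [if_pos rfl]
  have hOi : (∫⁻ z, ftilde z ∂(O i)) ≤ ∑ t ∈ Icc 1 i, ∫⁻ z, go t z ∂(O i) := by
    rw [← lintegral_finset_sum _ (fun t _ => hgo t)]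
    exact lintegral_mono_ae ((aeB i hiT).mono fun z hz => hboundB i hi z hz)
  have hcollect : ∑ t ∈ Icc 1 i,
      π i * ((1 - α i) * (∫⁻ z, (if i = t then gc t z else go t z) ∂(D i))
        + α i * (∫⁻ z, go t z ∂(O i)))
      = π i * ((1 - α i) * ∑ t ∈ Icc 1 i,
          (∫⁻ z, (if i = t then gc t z else go t z) ∂(D i))
        + α i * ∑ t ∈ Icc 1 i, (∫⁻ z, go t z ∂(O i))) := by
    rw [← Finset.mul_sum, Finset.sum_add_distrib, ← Finset.mul_sum, ← Finset.mul_sum]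
  rw [hcollect]
  exact mul_le_mul_right (add_le_add (mul_le_mul_right hDi _) (mul_le_mul_right hOi _)) _
end

section
/- Theorem 3.3 (partially-observable open-world bounds imply fully-observable open-world bounds, quantitative form): Fix 1 ≤ k ≤ T and ε > 0. Let g_1^o, …, g_T^o, g_1^c, …, g_T^c and f̃ be measurable functions Z → [0,∞] such that for every 1 ≤ i ≤ k: f̃(z) ≤ Σ_{t=1}^{i−1} g_t^o(z) + g_i^c(z) for all z ∈ A_i, and f̃(z) ≤ Σ_{t=1}^{i} g_t^o(z) for all z ∈ B_i. For 1 ≤ t ≤ k define F_t : Z → [0,∞] by F_t(z) = g_t^c(z) if z ∈ A_t; F_t(z) = g_t^o(z) if z ∈ A_i for some t < i ≤ k or z ∈ B_i for some t ≤ i ≤ k; and F_t(z) = 0 otherwise. If ∫ F_t dD_t^{α′_t} < ε for every 1 ≤ t ≤ k, then ∫ f̃ dD_{[1:k]}^{α} < ε · Σ_{t=1}^{k} π_{[t:T]}/π_{[1:k]}; in particular ∫ f̃ dD_{[1:k]}^{α} < ε · max_{1 ≤ k′ ≤ T} Σ_{t=1}^{k′} π_{[t:T]}/π_{[1:k′]}.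 -/
open MeasureTheory Finset

/-- Theorem 3.3 (partially-observable open-world bounds imply fully-observable
open-world bounds, quantitative form): if `∫ F_t dD_t^{α′_t} < ε` for every
`1 ≤ t ≤ k`, then `∫ f̃ dD_{[1:k]}^{α} < ε · ∑_{t=1}^{k} π_{[t:T]}/π_{[1:k]}`,
and in particular `∫ f̃ dD_{[1:k]}^{α} < ε · max_{1 ≤ k′ ≤ T} ∑_{t=1}^{k′} π_{[t:T]}/π_{[1:k′]}`. -/
theorem partially_observable_implies_fully_observable_thm33
    {Z : Type*} [MeasurableSpace Z]
    (T : ℕ) (hT : 1 ≤ T)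
    (D O : ℕ → Measure Z)
    (hD : ∀ i ∈ Icc 1 T, IsProbabilityMeasure (D i))
    (hO : ∀ i ∈ Icc 1 T, IsProbabilityMeasure (O i))
    (π : ℕ → ENNReal) (hπpos : ∀ i ∈ Icc 1 T, 0 < π i)
    (hπsum : ∑ i ∈ Icc 1 T, π i = 1)
    (α : ℕ → ENNReal) (hα : ∀ i ∈ Icc 1 T, α i < 1)
    (A B : ℕ → Set Z)
    (hAmeas : ∀ i ∈ Icc 1 T, MeasurableSet (A i))
    (hBmeas : ∀ i ∈ Icc 1 T, MeasurableSet (B i))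
    (hdisj : ∀ i ∈ Icc 1 T, ∀ j ∈ Icc 1 T,
      (i ≠ j → Disjoint (A i) (A j)) ∧ (i ≠ j → Disjoint (B i) (B j)) ∧
        Disjoint (A i) (B j))
    (hDsupp : ∀ i ∈ Icc 1 T, D i (A i) = 1)
    (hOsupp : ∀ i ∈ Icc 1 T, O i (B i) = 1)
    (k : ℕ) (hk : k ∈ Icc 1 T)
    (ε : ENNReal) (hε : 0 < ε)
    (go gc : ℕ → Z → ENNReal) (ftilde : Z → ENNReal)
    (hgo : ∀ t, Measurable (go t)) (hgc : ∀ t, Measurable (gc t))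
    (hftilde : Measurable ftilde)
    (hboundA : ∀ i ∈ Icc 1 k, ∀ z ∈ A i,
      ftilde z ≤ ∑ t ∈ Icc 1 (i - 1), go t z + gc i z)
    (hboundB : ∀ i ∈ Icc 1 k, ∀ z ∈ B i,
      ftilde z ≤ ∑ t ∈ Icc 1 i, go t z)
    (hsmall : ∀ t ∈ Icc 1 k,
      (∫⁻ z,
          ((A t).indicator (gc t) z +
            (⋃ i ∈ Set.Ioc t k, A i).indicator (go t) z +
            (⋃ i ∈ Set.Icc t k, B i).indicator (go t) z)
          ∂((∑ i ∈ Icc t T, π i)⁻¹ •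
            ∑ i ∈ Icc t T, π i • ((1 - α i) • D i + α i • O i))) < ε) :
    (∫⁻ z, ftilde z
        ∂((∑ i ∈ Icc 1 k, π i)⁻¹ •
          ∑ i ∈ Icc 1 k, π i • ((1 - α i) • D i + α i • O i)))
      < ε * ∑ t ∈ Icc 1 k, (∑ i ∈ Icc t T, π i) / ∑ i ∈ Icc 1 k, π i ∧
    (∫⁻ z, ftilde z
        ∂((∑ i ∈ Icc 1 k, π i)⁻¹ •
          ∑ i ∈ Icc 1 k, π i • ((1 - α i) • D i + α i • O i)))
      < ε * ⨆ k' ∈ Icc 1 T,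
          ∑ t ∈ Icc 1 k', (∑ i ∈ Icc t T, π i) / ∑ i ∈ Icc 1 k', π i := by
  obtain ⟨hk1, hkT⟩ := Finset.mem_Icc.mp hk
  have hsubT : Icc 1 k ⊆ Icc 1 T := Finset.Icc_subset_Icc le_rfl hkT
  have hπle : ∀ s : Finset ℕ, s ⊆ Icc 1 T → ∑ i ∈ s, π i ≤ 1 := by
    intro s hs; rw [← hπsum]; exact Finset.sum_le_sum_of_subset hs
  have hπne_top : ∀ s : Finset ℕ, s ⊆ Icc 1 T → ∑ i ∈ s, π i ≠ ⊤ :=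
    fun s hs => ne_top_of_le_ne_top ENNReal.one_ne_top (hπle s hs)
  have hsumpos : ∀ t ∈ Icc 1 k, (0 : ENNReal) < ∑ i ∈ Icc t T, π i := by
    intro t ht
    obtain ⟨ht1, htk⟩ := Finset.mem_Icc.mp ht
    exact lt_of_lt_of_le (hπpos t (Finset.mem_Icc.mpr ⟨ht1, htk.trans hkT⟩))
      (Finset.single_le_sum (fun _ _ => zero_le)
        (Finset.mem_Icc.mpr ⟨le_rfl, htk.trans hkT⟩))
  -- expansion of the lintegral against the mixture measure
  have expand : ∀ (s : Finset ℕ) (f : Z → ENNReal),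
      ∫⁻ z, f z ∂(∑ i ∈ s, π i • ((1 - α i) • D i + α i • O i))
        = ∑ i ∈ s, π i * ((1 - α i) * ∫⁻ z, f z ∂(D i) + α i * ∫⁻ z, f z ∂(O i)) := by
    intro s f
    rw [lintegral_finset_sum_measure]
    exact Finset.sum_congr rfl fun i _ => by
      rw [lintegral_smul_measure, lintegral_add_measure, lintegral_smul_measure,
        lintegral_smul_measure]
      simp only [smul_eq_mul]
  -- a.e. supports
  have haeA : ∀ i ∈ Icc 1 T, ∀ᵐ z ∂(D i), z ∈ A i := by
    intro i hi
    have : IsProbabilityMeasure (D i) := hD i hi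
    rw [ae_iff]
    have h0 : D i ((A i)ᶜ) = 0 := by
      rw [measure_compl (hAmeas i hi) (measure_ne_top _ _), hDsupp i hi, measure_univ,
        tsub_self]
    simpa [Set.compl_def] using h0
  have haeB : ∀ i ∈ Icc 1 T, ∀ᵐ z ∂(O i), z ∈ B i := by
    intro i hi
    have : IsProbabilityMeasure (O i) := hO i hi
    rw [ae_iff]
    have h0 : O i ((B i)ᶜ) = 0 := by
      rw [measure_compl (hBmeas i hi) (measure_ne_top _ _), hOsupp i hi, measure_univ,
        tsub_self]
    simpa [Set.compl_def] using h0
  -- per-task upper bounds on the integral of ftilde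
  have hDbound : ∀ i ∈ Icc 1 k,
      (∫⁻ z, ftilde z ∂(D i))
        ≤ ∑ t ∈ Icc 1 (i - 1), ∫⁻ z, (A i).indicator (go t) z ∂(D i)
            + ∫⁻ z, (A i).indicator (gc i) z ∂(D i) := by
    intro i hi
    have hi' := hsubT hi
    calc ∫⁻ z, ftilde z ∂(D i)
        ≤ ∫⁻ z, (∑ t ∈ Icc 1 (i - 1), (A i).indicator (go t) z
            + (A i).indicator (gc i) z) ∂(D i) := by
          refine lintegral_mono_ae ?_
          filter_upwards [haeA i hi'] with z hz
          simpa [Set.indicator_of_mem hz] using hboundA i hi z hz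
      _ = _ := by
          rw [lintegral_add_right _ ((hgc i).indicator (hAmeas i hi')),
            lintegral_finset_sum _ (fun t _ => (hgo t).indicator (hAmeas i hi'))]
  have hObound : ∀ i ∈ Icc 1 k,
      (∫⁻ z, ftilde z ∂(O i))
        ≤ ∑ t ∈ Icc 1 i, ∫⁻ z, (B i).indicator (go t) z ∂(O i) := by
    intro i hi
    have hi' := hsubT hi
    calc ∫⁻ z, ftilde z ∂(O i)
        ≤ ∫⁻ z, (∑ t ∈ Icc 1 i, (B i).indicator (go t) z) ∂(O i) := by
          refine lintegral_mono_ae ?_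
          filter_upwards [haeB i hi'] with z hz
          simpa [Set.indicator_of_mem hz] using hboundB i hi z hz
      _ = _ := lintegral_finset_sum _ (fun t _ => (hgo t).indicator (hBmeas i hi'))
  -- per-pair summands
  set X : ℕ → ℕ → ENNReal := fun t i =>
    π i * ((1 - α i) *
        (if i = t then ∫⁻ z, (A i).indicator (gc t) z ∂(D i)
         else ∫⁻ z, (A i).indicator (go t) z ∂(D i))
      + α i * ∫⁻ z, (B i).indicator (go t) z ∂(O i)) with hX
  -- per-task inequality obtained by summing the pieces
  have hper : ∀ i ∈ Icc 1 k,
      π i * ((1 - α i) * ∫⁻ z, ftilde z ∂(D i) + α i * ∫⁻ z, ftilde z ∂(O i))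
        ≤ ∑ t ∈ Icc 1 i, X t i := by
    intro i hi
    obtain ⟨hi1, hik⟩ := Finset.mem_Icc.mp hi
    have hii : i - 1 + 1 = i := by omega
    have hsplit : ∀ f : ℕ → ENNReal,
        ∑ t ∈ Icc 1 i, f t = ∑ t ∈ Icc 1 (i - 1), f t + f i := by
      intro f
      have := Finset.sum_Icc_succ_top (a := 1) (b := i - 1) (by omega) f
      rwa [hii] at this
    rw [hX]
    simp only []
    rw [← Finset.mul_sum, Finset.sum_add_distrib, ← Finset.mul_sum, ← Finset.mul_sum]
    refine mul_le_mul_right (add_le_add (mul_le_mul_right ?_ _) (mul_le_mul_right ?_ _)) _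
    · refine (hDbound i hi).trans (le_of_eq ?_)
      rw [hsplit]
      congr 1
      · refine Finset.sum_congr rfl fun t ht => ?_
        have : i ≠ t := by
          simp only [Finset.mem_Icc] at ht; omega
        rw [if_neg this]
      · rw [if_pos rfl]
    · exact hObound i hi
  -- the partial observability bounds, per t
  have hFt : ∀ t ∈ Icc 1 k,
      ∑ i ∈ Icc t k, X t i < ε * ∑ i ∈ Icc t T, π i := by
    intro t ht
    obtain ⟨ht1, htk⟩ := Finset.mem_Icc.mp ht
    have hc0 : (∑ i ∈ Icc t T, π i) ≠ 0 := (hsumpos t ht).ne'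
    have hctop : (∑ i ∈ Icc t T, π i) ≠ ⊤ :=
      hπne_top _ (Finset.Icc_subset_Icc ht1 le_rfl)
    have hμ : (∫⁻ z,
          ((A t).indicator (gc t) z +
            (⋃ i ∈ Set.Ioc t k, A i).indicator (go t) z +
            (⋃ i ∈ Set.Icc t k, B i).indicator (go t) z)
          ∂(∑ i ∈ Icc t T, π i • ((1 - α i) • D i + α i • O i)))
        < ε * ∑ i ∈ Icc t T, π i := by
      have h1 := hsmall t ht
      rw [lintegral_smul_measure] at h1
      calc (∫⁻ z,
          ((A t).indicator (gc t) z +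
            (⋃ i ∈ Set.Ioc t k, A i).indicator (go t) z +
            (⋃ i ∈ Set.Icc t k, B i).indicator (go t) z)
          ∂(∑ i ∈ Icc t T, π i • ((1 - α i) • D i + α i • O i)))
          = (∑ i ∈ Icc t T, π i) * ((∑ i ∈ Icc t T, π i)⁻¹ *
            ∫⁻ z,
              ((A t).indicator (gc t) z +
                (⋃ i ∈ Set.Ioc t k, A i).indicator (go t) z +
                (⋃ i ∈ Set.Icc t k, B i).indicator (go t) z)
              ∂(∑ i ∈ Icc t T, π i • ((1 - α i) • D i + α i • O i))) := by
            rw [← mul_assoc, ENNReal.mul_inv_cancel hc0 hctop, one_mul]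
        _ < (∑ i ∈ Icc t T, π i) * ε := (ENNReal.mul_lt_mul_iff_right hc0 hctop).mpr h1
        _ = ε * ∑ i ∈ Icc t T, π i := mul_comm _ _
    refine lt_of_le_of_lt ?_ hμ
    rw [expand]
    refine le_trans ?_ (Finset.sum_le_sum_of_subset_of_nonneg
      (Finset.Icc_subset_Icc le_rfl hkT) (fun _ _ _ => zero_le))
    refine Finset.sum_le_sum fun i hi => ?_
    obtain ⟨hti, hik⟩ := Finset.mem_Icc.mp hi
    rw [hX]
    refine mul_le_mul_right (add_le_add (mul_le_mul_right ?_ _) (mul_le_mul_right ?_ _)) _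
    · by_cases hit : i = t
      · subst hit
        rw [if_pos rfl]
        exact lintegral_mono fun z => le_add_right (le_add_right le_rfl)
      · rw [if_neg hit]
        refine lintegral_mono fun z => ?_
        calc (A i).indicator (go t) z
            ≤ (⋃ j ∈ Set.Ioc t k, A j).indicator (go t) z :=
              Set.indicator_le_indicator_of_subset
                (Set.subset_biUnion_of_mem (Set.mem_Ioc.mpr ⟨lt_of_le_of_ne hti (Ne.symm hit), hik⟩))
                (fun _ => zero_le) z
          _ ≤ _ := le_add_right (le_add_left le_rfl)
    · refine lintegral_mono fun z => ?_
      calc (B i).indicator (go t) z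
          ≤ (⋃ j ∈ Set.Icc t k, B j).indicator (go t) z :=
            Set.indicator_le_indicator_of_subset
              (Set.subset_biUnion_of_mem (Set.mem_Icc.mpr ⟨hti, hik⟩))
              (fun _ => zero_le) z
        _ ≤ _ := le_add_left le_rfl
  -- main strict bound on the unnormalized integral
  have hS : (∫⁻ z, ftilde z ∂(∑ i ∈ Icc 1 k, π i • ((1 - α i) • D i + α i • O i)))
      < ∑ t ∈ Icc 1 k, ε * ∑ i ∈ Icc t T, π i := by
    rw [expand]
    calc ∑ i ∈ Icc 1 k, π i * ((1 - α i) * ∫⁻ z, ftilde z ∂(D i)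
            + α i * ∫⁻ z, ftilde z ∂(O i))
        ≤ ∑ i ∈ Icc 1 k, ∑ t ∈ Icc 1 i, X t i := Finset.sum_le_sum hper
      _ = ∑ t ∈ Icc 1 k, ∑ i ∈ Icc t k, X t i := by
          refine Finset.sum_comm' fun i t => ?_
          simp only [Finset.mem_Icc]
          omega
      _ < ∑ t ∈ Icc 1 k, ε * ∑ i ∈ Icc t T, π i :=
          ENNReal.sum_lt_sum_of_nonempty (Finset.nonempty_Icc.mpr hk1) hFt
  -- normalization bookkeeping
  have hP0 : (∑ i ∈ Icc 1 k, π i) ≠ 0 := by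
    refine (lt_of_lt_of_le (hπpos 1 (Finset.mem_Icc.mpr ⟨le_rfl, hT⟩))
      (Finset.single_le_sum (fun _ _ => zero_le)
        (Finset.mem_Icc.mpr ⟨le_rfl, hk1⟩))).ne'
  have hPtop : (∑ i ∈ Icc 1 k, π i) ≠ ⊤ := hπne_top _ hsubT
  have hmain : (∫⁻ z, ftilde z
        ∂((∑ i ∈ Icc 1 k, π i)⁻¹ •
          ∑ i ∈ Icc 1 k, π i • ((1 - α i) • D i + α i • O i)))
      < ε * ∑ t ∈ Icc 1 k, (∑ i ∈ Icc t T, π i) / ∑ i ∈ Icc 1 k, π i := by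
    rw [lintegral_smul_measure]
    have hrhs : ε * ∑ t ∈ Icc 1 k, (∑ i ∈ Icc t T, π i) / ∑ i ∈ Icc 1 k, π i
        = (∑ i ∈ Icc 1 k, π i)⁻¹ * ∑ t ∈ Icc 1 k, ε * ∑ i ∈ Icc t T, π i := by
      simp only [div_eq_mul_inv]
      rw [← Finset.sum_mul, ← Finset.mul_sum]
      ring
    rw [hrhs]
    exact (ENNReal.mul_lt_mul_iff_right (ENNReal.inv_ne_zero.mpr hPtop)
      (ENNReal.inv_ne_top.mpr hP0)).mpr hS
  refine ⟨hmain, lt_of_lt_of_le hmain (mul_le_mul_right ?_ ε)⟩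
  exact le_iSup₂ (f := fun k' (_ : k' ∈ Icc 1 T) =>
    ∑ t ∈ Icc 1 k', (∑ i ∈ Icc t T, π i) / ∑ i ∈ Icc 1 k', π i) k hk
end

section
/- Corollary 3.4 (replay data as OOD gives an order-free bound, quantitative form): Fix 1 ≤ k ≤ T and ε > 0. Let g_1^o, …, g_T^o, g_1^c, …, g_T^c and f̃ be measurable functions Z → [0,∞] such that for every 1 ≤ i ≤ k: f̃(z) ≤ Σ_{1 ≤ t ≤ k, t ≠ i} g_t^o(z) + g_i^c(z) for all z ∈ A_i, and f̃(z) ≤ Σ_{t=1}^{i} g_t^o(z) for all z ∈ B_i. For 1 ≤ t ≤ k define F̄_t : Z → [0,∞] by F̄_t(z) = g_t^c(z) if z ∈ A_t; F̄_t(z) = g_t^o(z) if z ∈ A_i for some 1 ≤ i ≤ k with i ≠ t, or z ∈ B_i for some t ≤ i ≤ k; and F̄_t(z) = 0 otherwise. Then ∫ f̃ dD_{[1:k]}^{α} ≤ (π_{[1:T]}/π_{[1:k]}) · Σ_{t=1}^{k} ∫ F̄_t dD̄, where D̄ = (1/π_{[1:T]}) Σ_{i=1}^{T} π_i·((1−α_i)·D_i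 + α_i·O_i). Consequently, if ∫ F̄_t dD̄ < ε for every 1 ≤ t ≤ k, then ∫ f̃ dD_{[1:k]}^{α} < ε · k · π_{[1:T]}/π_{[1:k]}. -/
open MeasureTheory Finset
open scoped ENNReal

/-- Corollary 3.4 (replay data as OOD gives an order-free bound, quantitative
form): with `F̄_t = g_t^c` on `A_t`, `F̄_t = g_t^o` on `A_i (1 ≤ i ≤ k, i ≠ t)`
and on `B_i (t ≤ i ≤ k)`, and `F̄_t = 0` elsewhere,
`∫ f̃ dD_{[1:k]}^{α} ≤ (π_{[1:T]}/π_{[1:k]}) · ∑_{t=1}^{k} ∫ F̄_t dD̄`; and if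
`∫ F̄_t dD̄ < ε` for every `1 ≤ t ≤ k` then
`∫ f̃ dD_{[1:k]}^{α} < ε · k · π_{[1:T]}/π_{[1:k]}`. -/
theorem replay_order_free_bound_cor34
    {Z : Type*} [MeasurableSpace Z]
    (T : ℕ) (hT : 1 ≤ T)
    (D O : ℕ → Measure Z)
    (hD : ∀ i ∈ Icc 1 T, IsProbabilityMeasure (D i))
    (hO : ∀ i ∈ Icc 1 T, IsProbabilityMeasure (O i))
    (π : ℕ → ENNReal) (hπpos : ∀ i ∈ Icc 1 T, 0 < π i)
    (hπsum : ∑ i ∈ Icc 1 T, π i = 1)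
    (α : ℕ → ENNReal) (hα : ∀ i ∈ Icc 1 T, α i < 1)
    (A B : ℕ → Set Z)
    (hAmeas : ∀ i ∈ Icc 1 T, MeasurableSet (A i))
    (hBmeas : ∀ i ∈ Icc 1 T, MeasurableSet (B i))
    (hdisj : ∀ i ∈ Icc 1 T, ∀ j ∈ Icc 1 T,
      (i ≠ j → Disjoint (A i) (A j)) ∧ (i ≠ j → Disjoint (B i) (B j)) ∧
        Disjoint (A i) (B j))
    (hDsupp : ∀ i ∈ Icc 1 T, D i (A i) = 1)
    (hOsupp : ∀ i ∈ Icc 1 T, O i (B i) = 1)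
    (k : ℕ) (hk : k ∈ Icc 1 T)
    (ε : ENNReal) (hε : 0 < ε)
    (go gc : ℕ → Z → ENNReal) (ftilde : Z → ENNReal)
    (hgo : ∀ t, Measurable (go t)) (hgc : ∀ t, Measurable (gc t))
    (hftilde : Measurable ftilde)
    (hboundA : ∀ i ∈ Icc 1 k, ∀ z ∈ A i,
      ftilde z ≤ ∑ t ∈ (Icc 1 k).erase i, go t z + gc i z)
    (hboundB : ∀ i ∈ Icc 1 k, ∀ z ∈ B i,
      ftilde z ≤ ∑ t ∈ Icc 1 i, go t z) :
    ((∫⁻ z, ftilde z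
        ∂((∑ i ∈ Icc 1 k, π i)⁻¹ •
          ∑ i ∈ Icc 1 k, π i • ((1 - α i) • D i + α i • O i)))
      ≤ ((∑ i ∈ Icc 1 T, π i) / ∑ i ∈ Icc 1 k, π i) *
          ∑ t ∈ Icc 1 k,
            ∫⁻ z,
              ((A t).indicator (gc t) z +
                (⋃ i ∈ Set.Icc 1 k \ {t}, A i).indicator (go t) z +
                (⋃ i ∈ Set.Icc t k, B i).indicator (go t) z)
              ∂((∑ i ∈ Icc 1 T, π i)⁻¹ •
                ∑ i ∈ Icc 1 T, π i • ((1 - α i) • D i + α i • O i))) ∧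
    ((∀ t ∈ Icc 1 k,
        (∫⁻ z,
            ((A t).indicator (gc t) z +
              (⋃ i ∈ Set.Icc 1 k \ {t}, A i).indicator (go t) z +
              (⋃ i ∈ Set.Icc t k, B i).indicator (go t) z)
            ∂((∑ i ∈ Icc 1 T, π i)⁻¹ •
              ∑ i ∈ Icc 1 T, π i • ((1 - α i) • D i + α i • O i))) < ε) →
      (∫⁻ z, ftilde z
          ∂((∑ i ∈ Icc 1 k, π i)⁻¹ •
            ∑ i ∈ Icc 1 k, π i • ((1 - α i) • D i + α i • O i)))
        < ε * k * ((∑ i ∈ Icc 1 T, π i) / ∑ i ∈ Icc 1 k, π i)) := by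
  classical
  obtain ⟨hk1, hkT⟩ := Finset.mem_Icc.mp hk
  -- abbreviations
  set m : ℕ → Measure Z := fun i => π i • ((1 - α i) • D i + α i • O i) with hm
  set μ : Measure Z := ∑ i ∈ Icc 1 k, m i with hμ
  set ν : Measure Z := ∑ i ∈ Icc 1 T, m i with hν
  set F : ℕ → Z → ENNReal := fun t z =>
    (A t).indicator (gc t) z + (⋃ i ∈ Set.Icc 1 k \ {t}, A i).indicator (go t) z +
      (⋃ i ∈ Set.Icc t k, B i).indicator (go t) z with hFdef
  have hsub : Icc 1 k ⊆ Icc 1 T := Finset.Icc_subset_Icc le_rfl hkT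
  have hπk0 : (∑ i ∈ Icc 1 k, π i) ≠ 0 := by
    intro h
    have h1 : (1 : ℕ) ∈ Icc 1 k := Finset.mem_Icc.mpr ⟨le_rfl, hk1⟩
    have := (Finset.sum_eq_zero_iff.mp h) 1 h1
    exact (hπpos 1 (hsub h1)).ne' this
  have hπkle : (∑ i ∈ Icc 1 k, π i) ≤ 1 := by
    rw [← hπsum]; exact Finset.sum_le_sum_of_subset hsub
  have hπktop : (∑ i ∈ Icc 1 k, π i) ≠ ∞ := ne_top_of_le_ne_top ENNReal.one_ne_top hπkle
  -- measurability of F t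
  have hFmeas : ∀ t ∈ Icc 1 k, Measurable (F t) := by
    intro t ht
    obtain ⟨ht1, htk⟩ := Finset.mem_Icc.mp ht
    have h1 : MeasurableSet (⋃ i ∈ Set.Icc 1 k \ {t}, A i) := by
      refine MeasurableSet.biUnion (Set.to_countable _) fun i hi => ?_
      obtain ⟨⟨hi1, hik⟩, -⟩ := hi
      exact hAmeas i (Finset.mem_Icc.mpr ⟨hi1, hik.trans hkT⟩)
    have h2 : MeasurableSet (⋃ i ∈ Set.Icc t k, B i) := by
      refine MeasurableSet.biUnion (Set.to_countable _) fun i hi => ?_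
      obtain ⟨hit, hik⟩ := hi
      exact hBmeas i (Finset.mem_Icc.mpr ⟨ht1.trans hit, hik.trans hkT⟩)
    exact (((hgc t).indicator (hAmeas t (hsub ht))).add ((hgo t).indicator h1)).add
      ((hgo t).indicator h2)
  -- pointwise bound on the support
  have hptA : ∀ i ∈ Icc 1 k, ∀ z ∈ A i, ftilde z ≤ ∑ t ∈ Icc 1 k, F t z := by
    intro i hi z hz
    obtain ⟨hi1, hik⟩ := Finset.mem_Icc.mp hi
    calc ftilde z ≤ ∑ t ∈ (Icc 1 k).erase i, go t z + gc i z := hboundA i hi z hz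
      _ ≤ ∑ t ∈ (Icc 1 k).erase i, F t z + F i z := by
          refine add_le_add (Finset.sum_le_sum fun t ht => ?_) ?_
          · obtain ⟨hti, htk⟩ := Finset.mem_erase.mp ht
            have hmem : z ∈ ⋃ j ∈ Set.Icc 1 k \ {t}, A j :=
              Set.mem_biUnion ⟨⟨hi1, hik⟩, fun (h : i ∈ ({t} : Set ℕ)) => hti (Set.mem_singleton_iff.mp h).symm⟩ hz
            calc go t z = (⋃ j ∈ Set.Icc 1 k \ {t}, A j).indicator (go t) z :=
                  (Set.indicator_of_mem hmem _).symm
              _ ≤ F t z := le_add_self.trans le_self_add |>.trans le_rfl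
          · calc gc i z = (A i).indicator (gc i) z := (Set.indicator_of_mem hz _).symm
              _ ≤ F i z := (le_self_add.trans le_self_add)
      _ = ∑ t ∈ Icc 1 k, F t z := Finset.sum_erase_add _ _ hi
  have hptB : ∀ i ∈ Icc 1 k, ∀ z ∈ B i, ftilde z ≤ ∑ t ∈ Icc 1 k, F t z := by
    intro i hi z hz
    obtain ⟨hi1, hik⟩ := Finset.mem_Icc.mp hi
    calc ftilde z ≤ ∑ t ∈ Icc 1 i, go t z := hboundB i hi z hz
      _ ≤ ∑ t ∈ Icc 1 i, F t z := by
          refine Finset.sum_le_sum fun t ht => ?_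
          obtain ⟨ht1, hti⟩ := Finset.mem_Icc.mp ht
          have hmem : z ∈ ⋃ j ∈ Set.Icc t k, B j := Set.mem_biUnion ⟨hti, hik⟩ hz
          calc go t z = (⋃ j ∈ Set.Icc t k, B j).indicator (go t) z :=
                (Set.indicator_of_mem hmem _).symm
            _ ≤ F t z := le_add_self
      _ ≤ ∑ t ∈ Icc 1 k, F t z :=
          Finset.sum_le_sum_of_subset (Finset.Icc_subset_Icc le_rfl hik)
  -- support set
  set S : Set Z := ⋃ i ∈ Icc 1 k, (A i ∪ B i) with hSdef
  have hSmeas : MeasurableSet S := by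
    refine MeasurableSet.biUnion (Finset.countable_toSet _) fun i hi => ?_
    exact (hAmeas i (hsub hi)).union (hBmeas i (hsub hi))
  have hSnull : μ Sᶜ = 0 := by
    rw [hμ, Measure.finset_sum_apply]
    refine Finset.sum_eq_zero fun i hi => ?_
    have hiT := hsub hi
    haveI := hD i hiT
    haveI := hO i hiT
    have hAS : A i ⊆ S := fun z hz => Set.mem_biUnion hi (Or.inl hz)
    have hBS : B i ⊆ S := fun z hz => Set.mem_biUnion hi (Or.inr hz)
    have hDA : D i Sᶜ = 0 := by
      have h1 : D i Sᶜ ≤ D i (A i)ᶜ := measure_mono (Set.compl_subset_compl.mpr hAS)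
      have h2 : D i (A i)ᶜ = 0 := by
        rw [measure_compl (hAmeas i hiT) (measure_ne_top _ _), hDsupp i hiT,
          measure_univ, tsub_self]
      exact le_antisymm (h1.trans h2.le) zero_le
    have hOB : O i Sᶜ = 0 := by
      have h1 : O i Sᶜ ≤ O i (B i)ᶜ := measure_mono (Set.compl_subset_compl.mpr hBS)
      have h2 : O i (B i)ᶜ = 0 := by
        rw [measure_compl (hBmeas i hiT) (measure_ne_top _ _), hOsupp i hiT,
          measure_univ, tsub_self]
      exact le_antisymm (h1.trans h2.le) zero_le
    simp [hm, Measure.smul_apply, Measure.add_apply, hDA, hOB]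
  have hae : ∀ᵐ z ∂μ, ftilde z ≤ ∑ t ∈ Icc 1 k, F t z := by
    have hS : S ∈ ae μ := mem_ae_iff.mpr hSnull
    filter_upwards [hS] with z hz
    obtain ⟨_, ⟨i, rfl⟩, hz2⟩ := hz
    obtain ⟨_, ⟨hi, rfl⟩, hz3⟩ := hz2
    rcases hz3 with h | h
    · exact hptA i hi z h
    · exact hptB i hi z h
  -- measure comparison
  have hμν : μ ≤ ν := by
    refine Measure.le_iff.mpr fun s hs => ?_
    rw [hμ, hν, Measure.finset_sum_apply, Measure.finset_sum_apply]
    exact Finset.sum_le_sum_of_subset hsub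
  -- key inequality
  have key : ∫⁻ z, ftilde z ∂μ ≤ ∑ t ∈ Icc 1 k, ∫⁻ z, F t z ∂ν := by
    calc ∫⁻ z, ftilde z ∂μ ≤ ∫⁻ z, ∑ t ∈ Icc 1 k, F t z ∂μ := lintegral_mono_ae hae
      _ = ∑ t ∈ Icc 1 k, ∫⁻ z, F t z ∂μ := lintegral_finset_sum _ hFmeas
      _ ≤ ∑ t ∈ Icc 1 k, ∫⁻ z, F t z ∂ν :=
          Finset.sum_le_sum fun t ht => lintegral_mono' hμν le_rfl
  rw [hπsum]
  simp only [inv_one, one_smul, one_div]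
  have hLHS : (∫⁻ z, ftilde z ∂((∑ i ∈ Icc 1 k, π i)⁻¹ • μ))
      = (∑ i ∈ Icc 1 k, π i)⁻¹ * ∫⁻ z, ftilde z ∂μ := lintegral_smul_measure _ _
  constructor
  · rw [hLHS]
    exact mul_le_mul_right key _
  · intro h
    have hsumlt : ∑ t ∈ Icc 1 k, ∫⁻ z, F t z ∂ν < ε * k := by
      set a : ℕ → ENNReal := fun t => ∫⁻ z, F t z ∂ν with ha
      have hlt : ∀ t ∈ Icc 1 k, a t < ε := h
      have hkne : (k : ENNReal) ≠ 0 := Nat.cast_ne_zero.mpr (by omega)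
      by_cases hεtop : ε = ∞
      · have : ∑ t ∈ Icc 1 k, a t < ∞ := by
          refine ENNReal.sum_lt_top.mpr fun t ht => ?_
          exact hεtop ▸ hlt t ht
        calc ∑ t ∈ Icc 1 k, a t < ∞ := this
          _ = ε * k := by rw [hεtop, ENNReal.top_mul hkne]
      · have hane : ∀ t ∈ Icc 1 k, a t ≠ ∞ := fun t ht =>
          ((hlt t ht).trans_le le_top).ne
        have hsne : (∑ t ∈ Icc 1 k, a t) ≠ ∞ := by
          refine (ENNReal.sum_lt_top.mpr fun t ht => ?_).ne
          exact lt_of_le_of_ne le_top (hane t ht)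
        have hεkne : ε * k ≠ ∞ := ENNReal.mul_ne_top hεtop (ENNReal.natCast_ne_top k)
        rw [← ENNReal.toReal_lt_toReal hsne hεkne, ENNReal.toReal_sum hane]
        have hcard : (Icc 1 k).card = k := by rw [Nat.card_Icc]; omega
        calc ∑ t ∈ Icc 1 k, (a t).toReal
            < ∑ t ∈ Icc 1 k, ε.toReal := by
              refine Finset.sum_lt_sum_of_nonempty ⟨1, Finset.mem_Icc.mpr ⟨le_rfl, hk1⟩⟩
                fun t ht => ?_
              exact (ENNReal.toReal_lt_toReal (hane t ht) hεtop).mpr (hlt t ht)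
          _ = (ε * k).toReal := by
              rw [Finset.sum_const, hcard, ENNReal.toReal_mul, ENNReal.toReal_natCast,
                nsmul_eq_mul, mul_comm]
    rw [hLHS]
    have hinv0 : (∑ i ∈ Icc 1 k, π i)⁻¹ ≠ 0 := ENNReal.inv_ne_zero.mpr hπktop
    have hinvtop : (∑ i ∈ Icc 1 k, π i)⁻¹ ≠ ∞ := ENNReal.inv_ne_top.mpr hπk0
    calc (∑ i ∈ Icc 1 k, π i)⁻¹ * ∫⁻ z, ftilde z ∂μ
        ≤ (∑ i ∈ Icc 1 k, π i)⁻¹ * ∑ t ∈ Icc 1 k, ∫⁻ z, F t z ∂ν :=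
          mul_le_mul_right key _
      _ < (∑ i ∈ Icc 1 k, π i)⁻¹ * (ε * k) :=
          (ENNReal.mul_lt_mul_iff_right hinv0 hinvtop).mpr hsumlt
      _ = ε * k * (∑ i ∈ Icc 1 k, π i)⁻¹ := mul_comm _ _
end
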